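/- Let k ≥ 2 and let ℓ be an integer with gcd(ℓ, k+2) = 1; set s := i·exp(πiℓ/(2(k+2))) ∈ ℂ and t_a := (−1)^a·s^{a(a+2)} for a = 0, 1, ..., k. Then the conductor of C^br_{k,ℓ}, i.e. the least positive integer N such that t_a^N = 1 for all a ∈ {0,...,k}, equals: k+2 if k+ℓ ≡ 0 (mod 4); 2(k+2) if k+ℓ ≡ 2 (mod 4); and 4(k+2) if k+ℓ is odd. In particular, when k is even the conductor is always 4(k+2). -/

import Mathlib

/-- `2 ∣ x` when `2 ∣ x * y` and `y` is odd. -/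
private lemma two_dvd_left_of_odd {x y : ℤ} (h : (2:ℤ) ∣ x * y) (hy : y % 2 = 1) :
    (2:ℤ) ∣ x := by
  rcases Int.even_or_odd x with hx | hx
  · obtain ⟨r, hr⟩ := hx; exact ⟨r, by omega⟩
  · exfalso
    have hodd : (x * y) % 2 = 1 := Int.odd_iff.mp (hx.mul (Int.odd_iff.mpr hy))
    obtain ⟨r, hr⟩ := h
    omega

private lemma exp_iff (k : ℕ) (ℓ : ℤ) (s : ℂ)
    (hs : s = Complex.I * Complex.exp ((Real.pi : ℂ) * Complex.I * (ℓ : ℂ) / (2 * ((k : ℂ) + 2))))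
    (N a : ℕ) :
    (((-1) ^ a * s ^ (a * (a + 2))) ^ N = 1 ↔
      (4 * ((k:ℤ) + 2)) ∣ (N : ℤ) * (2 * ((k:ℤ)+2) * a + ((k:ℤ)+2+ℓ) * a * (a+2))) := by
  have hm0 : ((k:ℂ) + 2) ≠ 0 := by
    have : ((k:ℂ) + 2) = ((k+2 : ℕ) : ℂ) := by push_cast; ring
    rw [this]
    exact_mod_cast (Nat.succ_ne_zero (k+1))
  have hπ : (Real.pi : ℂ) ≠ 0 := Complex.ofReal_ne_zero.mpr Real.pi_ne_zero
  have hI : Complex.I ≠ 0 := Complex.I_ne_zero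
  have h2m0 : (2 * ((k:ℂ) + 2)) ≠ 0 := by
    exact mul_ne_zero two_ne_zero hm0
  set d : ℂ := Real.pi * Complex.I / (2 * ((k:ℂ)+2)) with hd
  have hdne : d ≠ 0 := div_ne_zero (mul_ne_zero hπ hI) h2m0
  -- I as an exponential
  have hIexp : Complex.I = Complex.exp (((k:ℂ)+2) * d) := by
    have h1 : ((k:ℂ)+2) * d = ((Real.pi/2 : ℝ) : ℂ) * Complex.I := by
      rw [hd]; push_cast; field_simp
    rw [h1, Complex.exp_mul_I, ← Complex.ofReal_cos, ← Complex.ofReal_sin,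
      Real.cos_pi_div_two, Real.sin_pi_div_two]
    simp
  have hsexp : s = Complex.exp ((((k:ℂ)+2) + (ℓ:ℂ)) * d) := by
    have harg : (((k:ℂ)+2) + (ℓ:ℂ)) * d
        = ((k:ℂ)+2)*d + (Real.pi : ℂ) * Complex.I * (ℓ : ℂ) / (2 * ((k : ℂ) + 2)) := by
      rw [hd]; field_simp
    rw [harg, Complex.exp_add, ← hIexp, ← hs]
  have hneg : (-1 : ℂ) = Complex.exp ((2*((k:ℂ)+2)) * d) := by
    have h1 : (2*((k:ℂ)+2)) * d = Real.pi * Complex.I := by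
      rw [hd]; field_simp
    rw [h1, Complex.exp_pi_mul_I]
  have hbase : ((-1 : ℂ)) ^ a * s ^ (a * (a + 2)) =
      Complex.exp (((2*((k:ℂ)+2)) * a + (((k:ℂ)+2) + (ℓ:ℂ)) * a * (a+2)) * d) := by
    rw [hneg, hsexp, ← Complex.exp_nat_mul, ← Complex.exp_nat_mul, ← Complex.exp_add]
    congr 1
    push_cast
    ring
  rw [hbase, ← Complex.exp_nat_mul, Complex.exp_eq_one_iff]
  constructor
  · rintro ⟨n, hn⟩
    refine ⟨n, ?_⟩
    have key : ((((N : ℤ) * (2 * ((k:ℤ)+2) * a + ((k:ℤ)+2+ℓ) * a * (a+2)) : ℤ)) : ℂ) * d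
        = ((4 * ((k:ℤ)+2) * n : ℤ) : ℂ) * d := by
      rw [show (((4 * ((k:ℤ)+2) * n : ℤ)) : ℂ) * d = (n : ℂ) * (2 * Real.pi * Complex.I) by
        push_cast; rw [hd]; field_simp; ring]
      rw [← hn]
      push_cast
      ring
    have := mul_right_cancel₀ hdne key
    exact_mod_cast this
  · rintro ⟨n, hn⟩
    refine ⟨n, ?_⟩
    calc (N:ℂ) * (((2*((k:ℂ)+2)) * a + (((k:ℂ)+2) + (ℓ:ℂ)) * a * (a+2)) * d)
        = (((N : ℤ) * (2 * ((k:ℤ)+2) * a + ((k:ℤ)+2+ℓ) * a * (a+2)) : ℤ) : ℂ) * d := by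
          push_cast; ring
      _ = ((4 * ((k:ℤ)+2) * n : ℤ) : ℂ) * d := by rw [hn]
      _ = (n : ℂ) * (2 * Real.pi * Complex.I) := by push_cast; rw [hd]; field_simp; ring

private lemma arith_least (k : ℕ) (hk : 2 ≤ k) (u : ℤ) (hcop : IsCoprime u ((k:ℤ)+2)) (c : ℕ)
    (hc : (u % 4 = 2 ∧ c = k+2) ∨ (u % 4 = 0 ∧ c = 2*(k+2)) ∨ (u % 2 = 1 ∧ c = 4*(k+2))) :
    IsLeast {N : ℕ | 0 < N ∧ ∀ a : ℕ, a ≤ k →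
      (4 * ((k:ℤ)+2)) ∣ (N:ℤ) * (2 * ((k:ℤ)+2) * a + u * a * (a+2))} c := by
  have hm4 : (4:ℤ) ≤ (k:ℤ)+2 := by omega
  have hmodd_of_ueven : (2:ℤ) ∣ u → ((k:ℤ)+2) % 2 = 1 := by
    intro h2u
    by_contra hmod
    have h2m : (2:ℤ) ∣ ((k:ℤ)+2) := by omega
    have := hcop.isUnit_of_dvd' h2u h2m
    rw [Int.isUnit_iff] at this
    omega
  constructor
  · refine ⟨by omega, fun a ha => ?_⟩
    rcases hc with ⟨hu, hceq⟩ | ⟨hu, hceq⟩ | ⟨hu, hceq⟩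
    · -- u ≡ 2 [4], c = k+2
      obtain ⟨w, hw⟩ : ∃ w, u = 4*w+2 := ⟨u/4, by omega⟩
      have hmodd := hmodd_of_ueven ⟨2*w+1, by omega⟩
      obtain ⟨cc, hcc⟩ : ∃ cc, (k:ℤ)+2 = 2*cc+1 := ⟨((k:ℤ)+2)/2, by omega⟩
      rcases Nat.even_or_odd a with ⟨b, hb⟩ | ⟨b, hb⟩
      · refine ⟨((k:ℤ)+2)*b + u*b*(b+1), ?_⟩
        have hbz : (a:ℤ) = b + b := by exact_mod_cast congrArg (Nat.cast : ℕ → ℤ) hb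
        subst hceq
        push_cast
        rw [hbz]
        ring
      · refine ⟨(2*b+1)*(cc+2*w*b+3*w+b+2), ?_⟩
        have hbz : (a:ℤ) = 2*b + 1 := by exact_mod_cast congrArg (Nat.cast : ℕ → ℤ) hb
        subst hceq
        push_cast
        rw [hbz, hw, hcc]
        ring
    · -- u ≡ 0 [4], c = 2(k+2)
      obtain ⟨w, hw⟩ : ∃ w, u = 4*w := ⟨u/4, by omega⟩
      refine ⟨((k:ℤ)+2)*a + 2*w*a*(a+2), ?_⟩
      subst hceq
      push_cast
      rw [hw]
      ring
    · -- u odd, c = 4(k+2)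
      refine ⟨2*((k:ℤ)+2)*a + u*a*(a+2), ?_⟩
      subst hceq
      push_cast
      ring
  · rintro N ⟨hNpos, hD⟩
    obtain ⟨q1, hq1⟩ := hD 1 (by omega)
    obtain ⟨q2, hq2⟩ := hD 2 hk
    push_cast at hq1 hq2
    -- hq1 : N * (2*(k+2)*1 + u*1*(1+2)) = 4*(k+2)*q1
    -- hq2 : N * (2*(k+2)*2 + u*2*(2+2)) = 4*(k+2)*q2
    have h3 : (2:ℤ)*((N:ℤ)*u) = 2*(2*((k:ℤ)+2)*(q2-2*q1)) := by linear_combination hq2 - 2*hq1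
    have h4 : (N:ℤ)*u = 2*((k:ℤ)+2)*(q2-2*q1) := mul_left_cancel₀ two_ne_zero h3
    have hmN : ((k:ℤ)+2) ∣ (N:ℤ) :=
      hcop.symm.dvd_of_dvd_mul_right ⟨2*(q2-2*q1), by linear_combination h4⟩
    have hfin : ∀ c' : ℕ, (c':ℤ) ∣ (N:ℤ) → c' ≤ N := by
      intro c' hdvd
      exact Nat.le_of_dvd hNpos (Int.natCast_dvd_natCast.mp hdvd)
    rcases hc with ⟨hu, hceq⟩ | ⟨hu, hceq⟩ | ⟨hu, hceq⟩
    · subst hceq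
      exact hfin _ (by push_cast; exact hmN)
    · -- u ≡ 0 [4]: show 2*(k+2) ∣ N
      obtain ⟨w, hw⟩ : ∃ w, u = 4*w := ⟨u/4, by omega⟩
      have hmodd := hmodd_of_ueven ⟨2*w, by omega⟩
      have h5 : (2:ℤ)*((N:ℤ)*(((k:ℤ)+2)+6*w)) = 2*(2*((k:ℤ)+2)*q1) := by
        linear_combination hq1 - 3*(N:ℤ)*hw
      have h6 : (N:ℤ)*(((k:ℤ)+2)+6*w) = 2*((k:ℤ)+2)*q1 := mul_left_cancel₀ two_ne_zero h5
      have hdvd2 : (2:ℤ) ∣ (N:ℤ)*(((k:ℤ)+2)+6*w) := ⟨((k:ℤ)+2)*q1, by linear_combination h6⟩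
      have h2N : (2:ℤ) ∣ (N:ℤ) := two_dvd_left_of_odd hdvd2 (by omega)
      obtain ⟨cc, hcc⟩ : ∃ cc, (k:ℤ)+2 = 2*cc+1 := ⟨((k:ℤ)+2)/2, by omega⟩
      have hcop2m : IsCoprime (2:ℤ) ((k:ℤ)+2) := ⟨-cc, 1, by omega⟩
      have := hcop2m.mul_dvd h2N hmN
      subst hceq
      exact hfin _ (by push_cast; exact this)
    · -- u odd: show 4*(k+2) ∣ N
      obtain ⟨d, hdodd⟩ : ∃ d, u = 2*d+1 := ⟨u/2, by omega⟩
      have hcop2u : IsCoprime (2:ℤ) u := ⟨-d, 1, by omega⟩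
      have hcop2mu : IsCoprime (2*((k:ℤ)+2)) u := hcop2u.mul_left hcop.symm
      have h2mN : (2*((k:ℤ)+2)) ∣ (N:ℤ) :=
        hcop2mu.dvd_of_dvd_mul_right ⟨q2-2*q1, h4⟩
      obtain ⟨q, hq⟩ := h2mN
      have h7 : (2*((k:ℤ)+2))*(q*(2*((k:ℤ)+2)+3*u)) = (2*((k:ℤ)+2))*(2*q1) := by
        linear_combination hq1 - (2*((k:ℤ)+2)+3*u)*hq
      have h8 := mul_left_cancel₀ (show (2*((k:ℤ)+2)) ≠ 0 by omega) h7
      have hdvd2 : (2:ℤ) ∣ q*(2*((k:ℤ)+2)+3*u) := ⟨q1, h8⟩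
      have h2q : (2:ℤ) ∣ q := two_dvd_left_of_odd hdvd2 (by omega)
      obtain ⟨r, hr⟩ := h2q
      subst hceq
      refine hfin _ ⟨r, ?_⟩
      push_cast
      rw [hq, hr]
      ring

/-- For `k ≥ 2`, `gcd(ℓ, k+2) = 1`, `s = i·exp(πiℓ/(2(k+2)))`, and quantum twists
`t_a = (-1)^a·s^(a(a+2))`, the conductor of `C^br_{k,ℓ}` — the least positive `N`
with `t_a^N = 1` for all `0 ≤ a ≤ k` — equals `k+2` if `k+ℓ ≡ 0 (mod 4)`,
`2(k+2)` if `k+ℓ ≡ 2 (mod 4)`, and `4(k+2)` if `k+ℓ` is odd. In particular when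
`k` is even the conductor is always `4(k+2)`. -/
theorem stmt10 (k : ℕ) (hk : 2 ≤ k) (ℓ : ℤ) (hl : Int.gcd ℓ ((k : ℤ) + 2) = 1)
    (s : ℂ)
    (hs : s = Complex.I * Complex.exp ((Real.pi : ℂ) * Complex.I * (ℓ : ℂ) / (2 * ((k : ℂ) + 2)))) :
    IsLeast {N : ℕ | 0 < N ∧ ∀ a : ℕ, a ≤ k → ((-1) ^ a * s ^ (a * (a + 2))) ^ N = 1}
      (if ((k : ℤ) + ℓ) % 4 = 0 then k + 2
        else if ((k : ℤ) + ℓ) % 4 = 2 then 2 * (k + 2)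
        else 4 * (k + 2)) ∧
      (Even k →
        IsLeast {N : ℕ | 0 < N ∧ ∀ a : ℕ, a ≤ k → ((-1) ^ a * s ^ (a * (a + 2))) ^ N = 1}
          (4 * (k + 2))) := by
  have hcopl : IsCoprime ℓ ((k:ℤ)+2) := Int.isCoprime_iff_gcd_eq_one.mpr hl
  have hcop : IsCoprime ((k:ℤ)+2+ℓ) ((k:ℤ)+2) := by
    have := hcopl.add_mul_left_left 1
    rwa [show ℓ + ((k:ℤ)+2)*1 = (k:ℤ)+2+ℓ by ring] at this
  have hset : {N : ℕ | 0 < N ∧ ∀ a : ℕ, a ≤ k → ((-1) ^ a * s ^ (a * (a + 2))) ^ N = 1}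
      = {N : ℕ | 0 < N ∧ ∀ a : ℕ, a ≤ k →
          (4 * ((k:ℤ)+2)) ∣ (N:ℤ) * (2 * ((k:ℤ)+2) * a + ((k:ℤ)+2+ℓ) * a * (a+2))} := by
    ext N
    simp only [Set.mem_setOf_eq]
    exact and_congr_right fun _ => forall_congr' fun a =>
      imp_congr_right fun _ => exp_iff k ℓ s hs N a
  rw [hset]
  constructor
  · split_ifs with h1 h2
    · exact arith_least k hk _ hcop _ (Or.inl ⟨by omega, rfl⟩)
    · exact arith_least k hk _ hcop _ (Or.inr (Or.inl ⟨by omega, rfl⟩))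
    · refine arith_least k hk _ hcop _ (Or.inr (Or.inr ⟨?_, rfl⟩))
      omega
  · intro hke
    obtain ⟨b, hb⟩ := hke
    have hbz : (k:ℤ) = b + b := by exact_mod_cast congrArg (Nat.cast : ℕ → ℤ) hb
    have hlodd : ℓ % 2 = 1 := by
      by_contra hmod
      have h2l : (2:ℤ) ∣ ℓ := by omega
      have h2m : (2:ℤ) ∣ ((k:ℤ)+2) := ⟨(b:ℤ)+1, by omega⟩
      have := hcopl.isUnit_of_dvd' h2l h2m
      rw [Int.isUnit_iff] at this
      omega
    exact arith_least k hk _ hcop _ (Or.inr (Or.inr ⟨by omega, rfl⟩))
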